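/- If f = h + conj(g) ∈ M(α) with |α| ≤ 1, where h(z) = z + Σ_{n≥2} aₙzⁿ and g(z) = Σ_{n≥1} bₙzⁿ, and the coefficient bounds |aₙ| ≤ (n+1)/2 hold for n ≥ 2, then |bₙ| ≤ ((n-1)/2)|α| for all n ≥ 2 and b₁ = 0. -/

import Mathlib

open Complex Metric

private lemma iterConv {s : Set ℂ} (hs : IsOpen s) {x : ℂ} (hx : x ∈ s)
    (n : ℕ) (f : ℂ → ℂ) :
    iteratedDerivWithin n f s x = iteratedDeriv n f x := by
  rw [iteratedDerivWithin_eq_iteratedFDerivWithin, iteratedDeriv_eq_iteratedFDeriv,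
    iteratedFDerivWithin_of_isOpen n hs hx]

private lemma iterAdd {s : Set ℂ} (hs : IsOpen s) {x : ℂ} (hx : x ∈ s)
    {f g : ℂ → ℂ} (hf : AnalyticOnNhd ℂ f s) (hg : AnalyticOnNhd ℂ g s) (n : ℕ) :
    iteratedDeriv n (fun z => f z + g z) x = iteratedDeriv n f x + iteratedDeriv n g x := by
  rw [← iterConv hs hx, ← iterConv hs hx, ← iterConv hs hx]
  exact iteratedDerivWithin_add hx hs.uniqueDiffOn
    ((hf.contDiffOn hs.uniqueDiffOn).contDiffWithinAt hx) ((hg.contDiffOn hs.uniqueDiffOn).contDiffWithinAt hx)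

private lemma iterConstMul {s : Set ℂ} (hs : IsOpen s) {x : ℂ} (hx : x ∈ s)
    (c : ℂ) {f : ℂ → ℂ} (hf : AnalyticOnNhd ℂ f s) (n : ℕ) :
    iteratedDeriv n (fun z => c * f z) x = c * iteratedDeriv n f x := by
  rw [← iterConv hs hx, ← iterConv hs hx]
  exact iteratedDerivWithin_const_mul hx hs.uniqueDiffOn c ((hf.contDiffOn hs.uniqueDiffOn).contDiffWithinAt hx)

private lemma iterKey {s : Set ℂ} (hs : IsOpen s) (h0 : (0 : ℂ) ∈ s) :
    ∀ (m : ℕ) (u : ℂ → ℂ), AnalyticOnNhd ℂ u s →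
      iteratedDeriv (m + 1) (fun z => z * u z) 0 = (m + 1 : ℂ) * iteratedDeriv m u 0 := by
  intro m
  induction m with
  | zero =>
    intro u hu
    rw [iteratedDeriv_one, iteratedDeriv_zero]
    have := deriv_fun_mul (differentiableAt_fun_id (x := (0:ℂ))) ((hu 0 h0).differentiableAt)
    simp [this]
  | succ m IH =>
    intro u hu
    have hu' : AnalyticOnNhd ℂ (deriv u) s := hu.deriv
    have heq : deriv (fun z => z * u z) =ᶠ[nhds (0:ℂ)] fun z => u z + z * deriv u z := by
      filter_upwards [hs.mem_nhds h0] with z hz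
      have := deriv_fun_mul (differentiableAt_fun_id (x := z)) ((hu z hz).differentiableAt)
      simpa [mul_comm] using this
    rw [iteratedDeriv_succ' (f := fun z => z * u z),
      heq.iteratedDeriv_eq (m + 1),
      iterAdd hs h0 hu (analyticOnNhd_id.mul hu') (m + 1),
      IH (deriv u) hu', ← iteratedDeriv_succ']
    push_cast
    ring

theorem stmt7
    (h g : ℂ → ℂ) (α : ℂ) (hα : ‖α‖ ≤ 1)
    (hha : AnalyticOn ℂ h (ball (0 : ℂ) 1))
    (hga : AnalyticOn ℂ g (ball (0 : ℂ) 1))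
    (h0 : h 0 = 0) (h1 : deriv h 0 = 1) (g0 : g 0 = 0)
    (hderiv : ∀ z ∈ ball (0 : ℂ) 1, deriv g z = α * z * deriv h z)
    (hre : ∀ z ∈ ball (0 : ℂ) 1,
      (1 + z * deriv (deriv h) z / deriv h z).re > -(1 / 2))
    (a b : ℕ → ℂ)
    (ha : ∀ n, a n = iteratedDeriv n h 0 / (n.factorial : ℂ))
    (hb : ∀ n, b n = iteratedDeriv n g 0 / (n.factorial : ℂ))
    (habound : ∀ n : ℕ, 2 ≤ n → ‖a n‖ ≤ ((n : ℝ) + 1) / 2) :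
    b 1 = 0 ∧ ∀ n : ℕ, 2 ≤ n → ‖b n‖ ≤ (((n : ℝ) - 1) / 2) * ‖α‖ := by
  have hs : IsOpen (ball (0:ℂ) 1) := isOpen_ball
  have h0mem : (0:ℂ) ∈ ball (0:ℂ) 1 := by simp
  have hhan : AnalyticOnNhd ℂ h (ball (0:ℂ) 1) := hs.analyticOn_iff_analyticOnNhd.mp hha
  have hu : AnalyticOnNhd ℂ (deriv h) (ball (0:ℂ) 1) := hhan.deriv
  constructor
  · have : deriv g 0 = 0 := by simpa using hderiv 0 h0mem
    simp [hb 1, iteratedDeriv_one, this]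
  · intro n hn
    obtain ⟨m, rfl⟩ : ∃ m, n = m + 2 := ⟨n - 2, by omega⟩
    -- key identity
    have heq : deriv g =ᶠ[nhds (0:ℂ)] fun z => α * (z * deriv h z) := by
      filter_upwards [hs.mem_nhds h0mem] with z hz
      rw [hderiv z hz]; ring
    have key : iteratedDeriv (m + 2) g 0 = α * ((m + 1 : ℂ) * iteratedDeriv (m + 1) h 0) := by
      rw [iteratedDeriv_succ' (n := m + 1) (f := g), heq.iteratedDeriv_eq (m + 1),
        iterConstMul hs h0mem α (analyticOnNhd_id.mul hu) (m + 1),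
        iterKey hs h0mem m (deriv h) hu, ← iteratedDeriv_succ']
    -- bound on a (m+1)
    have habd : ‖a (m + 1)‖ ≤ ((m : ℝ) + 2) / 2 := by
      rcases Nat.eq_zero_or_pos m with rfl | hm
      · have : a 1 = 1 := by simp [ha 1, iteratedDeriv_one, h1]
        rw [this]; norm_num
      · have := habound (m + 1) (by omega)
        push_cast at this ⊢; linarith
    have hfac : ((m + 1).factorial : ℂ) ≠ 0 := by
      exact_mod_cast Nat.cast_ne_zero.mpr (m + 1).factorial_ne_zero
    have hiter : iteratedDeriv (m + 1) h 0 = ((m + 1).factorial : ℂ) * a (m + 1) := by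
      rw [ha (m + 1)]; field_simp
    have hbval : b (m + 2) = α * ((m + 1 : ℂ) * (((m + 1).factorial : ℂ) * a (m + 1)))
        / ((m + 2).factorial : ℂ) := by
      rw [hb (m + 2), key, hiter]
    rw [hbval]
    rw [norm_div, norm_mul, norm_mul, norm_mul]
    have hfacR : ‖(((m + 2).factorial : ℕ) : ℂ)‖ = ((m + 2).factorial : ℝ) := by
      simp [Complex.norm_natCast]
    have h1R : ‖((m + 1 : ℕ) : ℂ)‖ = (m : ℝ) + 1 := by
      rw [Complex.norm_natCast]; push_cast; ring
    have h2R : ‖(((m + 1).factorial : ℕ) : ℂ)‖ = ((m + 1).factorial : ℝ) := by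
      simp [Complex.norm_natCast]
    have hcast : ((m + 1 : ℂ)) = ((m + 1 : ℕ) : ℂ) := by push_cast; ring
    rw [hcast, h1R, h2R, hfacR]
    have hfact2 : ((m + 2).factorial : ℝ) = ((m : ℝ) + 2) * ((m + 1).factorial : ℝ) := by
      rw [show m + 2 = (m + 1) + 1 from rfl, Nat.factorial_succ]
      push_cast; ring
    have hfpos : (0:ℝ) < ((m + 1).factorial : ℝ) := by positivity
    rw [hfact2]
    have hgoal : (((m : ℝ) + 2 : ℝ) - 1) / 2 = ((m : ℝ) + 1) / 2 := by ring
    push_cast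
    rw [div_le_iff₀ (by positivity)]
    have hb1 : ‖a (m + 1)‖ * 2 ≤ (m : ℝ) + 2 := by linarith
    calc ‖α‖ * (((m : ℝ) + 1) * (((m + 1).factorial : ℝ) * ‖a (m + 1)‖))
        = (((m:ℝ)+1) * ((m + 1).factorial : ℝ)) * (‖α‖ * ‖a (m + 1)‖) := by ring
      _ ≤ (((m:ℝ)+1) * ((m + 1).factorial : ℝ)) * (‖α‖ * (((m : ℝ) + 2) / 2)) := by
          apply mul_le_mul_of_nonneg_left _ (by positivity)
          exact mul_le_mul_of_nonneg_left habd (norm_nonneg _)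
      _ = ((m : ℝ) + 2 - 1) / 2 * ‖α‖ * (((m : ℝ) + 2) * ((m + 1).factorial : ℝ)) := by ring
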